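/- Let d ≥ 1 and let w ∈ GL_d(ℤ) be the cyclic permutation matrix corresponding to the cycle 1 ↦ 2 ↦ ⋯ ↦ d ↦ 1. If A ∈ GL_d(ℤ) has finite order and commutes with w, then A = w^k or A = −w^k for some k ∈ {0, 1, …, d−1}. -/

import Mathlib

/-- The `d × d` integer permutation matrix of the cycle `1 ↦ 2 ↦ ⋯ ↦ d ↦ 1`. -/
noncomputable def cycleMatrix (d : ℕ) : Matrix (Fin d) (Fin d) ℤ :=
  (finRotate d).permMatrix ℤ

open Polynomial
open Fin.NatCast
open Fin.CommRing

theorem nilp_aux (d : ℕ) (N : ℕ) (M : Matrix (Fin d) (Fin d) ℤ)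
    (hpow : (M + 1) ^ (N + 1) = 1) :
    ∀ r : ℕ, M ^ (r + 1) = 0 → M = 0 := by
  have hexp : (1 : Matrix (Fin d) (Fin d) ℤ) =
      ∑ i ∈ Finset.range (N + 2), M ^ i * ((N + 1).choose i : Matrix (Fin d) (Fin d) ℤ) := by
    rw [← hpow, (Commute.one_right M).add_pow]
    apply Finset.sum_congr rfl
    intro i _
    rw [one_pow, mul_one]
  have hzero : (0 : Matrix (Fin d) (Fin d) ℤ) =
      ∑ i ∈ Finset.range (N + 1), M ^ (i + 1) * ((N + 1).choose (i + 1) : Matrix (Fin d) (Fin d) ℤ) := by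
    have := hexp
    rw [Finset.sum_range_succ'] at this
    simp only [pow_zero, Nat.choose_zero_right, Nat.cast_one, one_mul, mul_one] at this
    exact ((add_eq_right).1 this.symm).symm
  intro r
  induction r with
  | zero => simpa using id
  | succ r ih =>
    intro h2
    apply ih
    have key : (0 : Matrix (Fin d) (Fin d) ℤ) =
        ∑ i ∈ Finset.range (N + 1), M ^ r * (M ^ (i + 1) * ((N + 1).choose (i + 1) : Matrix (Fin d) (Fin d) ℤ)) := by
      rw [← Finset.mul_sum, ← hzero, mul_zero]
    rw [Finset.sum_range_succ'] at key
    have hvanish : ∀ i ∈ Finset.range N,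
        M ^ r * (M ^ (i + 1 + 1) * ((N + 1).choose (i + 1 + 1) : Matrix (Fin d) (Fin d) ℤ)) = 0 := by
      intro i _
      have : M ^ r * M ^ (i + 1 + 1) = 0 := by
        have : M ^ r * M ^ (i + 1 + 1) = M ^ (r + 1 + 1) * M ^ i := by
          rw [← pow_add, ← pow_add]; ring_nf
        rw [this, h2, zero_mul]
      rw [← mul_assoc, this, zero_mul]
    rw [Finset.sum_eq_zero hvanish, zero_add, pow_one, Nat.choose_one_right, ← mul_assoc,
      ← pow_succ] at key
    have key2 : ((N + 1 : ℕ) : Matrix (Fin d) (Fin d) ℤ) * M ^ (r + 1) = 0 := by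
      rw [(Nat.cast_commute (N + 1) (M ^ (r + 1))).eq]
      exact key.symm
    rw [← nsmul_eq_mul] at key2
    ext i j
    have h4 := congrFun (congrFun key2 i) j
    simp only [Matrix.smul_apply, Matrix.zero_apply, nsmul_eq_mul] at h4
    rw [mul_eq_zero] at h4
    rcases h4 with h | h
    · exact absurd h (by positivity)
    · simpa using h

theorem exists_eigvec (d : ℕ) (M : Matrix (Fin d) (Fin d) ℂ) (t : ℂ) (h : M.charpoly.IsRoot t) :
    ∃ v ≠ 0, M.mulVec v = t • v := by
  have h2 : (t • (1 : Matrix (Fin d) (Fin d) ℂ) - M).det = 0 := by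
    have := RingHom.map_det (evalRingHom t) (Matrix.charmatrix M)
    rw [show Matrix.charpoly M = (Matrix.charmatrix M).det from rfl] at h
    have hm : (evalRingHom t).mapMatrix (Matrix.charmatrix M) = t • 1 - M := by
      ext i j
      by_cases hij : i = j <;>
        simp [hij, Matrix.charmatrix_apply, Matrix.one_apply, Matrix.diagonal_apply]
    rw [hm] at this
    rw [← this]
    exact h
  obtain ⟨v, hv, hv2⟩ := (Matrix.exists_mulVec_eq_zero_iff).2 h2
  refine ⟨v, hv, ?_⟩
  rw [Matrix.sub_mulVec, sub_eq_zero, Matrix.smul_mulVec, Matrix.one_mulVec] at hv2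
  exact hv2.symm

theorem pow_mulVec (d N : ℕ) (M : Matrix (Fin d) (Fin d) ℂ) (t : ℂ) (v : Fin d → ℂ)
    (h : M.mulVec v = t • v) : (M ^ N).mulVec v = t ^ N • v := by
  induction N with
  | zero => simp
  | succ n ih =>
    rw [pow_succ, pow_succ, ← Matrix.mulVec_mulVec, h, Matrix.mulVec_smul, ih, smul_smul,
      mul_comm]

theorem root_pow_one {d N : ℕ} (M : Matrix (Fin d) (Fin d) ℂ) (hM : M ^ N = 1)
    (t : ℂ) (h : M.charpoly.IsRoot t) : t ^ N = 1 := by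
  obtain ⟨v, hv, hv2⟩ := exists_eigvec d M t h
  have := pow_mulVec d N M t v hv2
  rw [hM, Matrix.one_mulVec] at this
  obtain ⟨i, hi⟩ := Function.ne_iff.1 hv
  have := congrFun this i
  simp only [Pi.smul_apply, smul_eq_mul] at this
  have h0 : (t ^ N - 1) * v i = 0 := by linear_combination -this
  rcases mul_eq_zero.1 h0 with h1 | h2
  · exact sub_eq_zero.1 h1
  · exact absurd h2 hi

theorem root_abs_one {d N : ℕ} (hN : 0 < N) (M : Matrix (Fin d) (Fin d) ℂ) (hM : M ^ N = 1)
    (t : ℂ) (h : t ∈ M.charpoly.roots) : ‖t‖ = 1 := by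
  have hr : t ^ N = 1 := root_pow_one M hM t (Polynomial.isRoot_of_mem_roots h)
  have habs : ‖t‖ ^ N = 1 := by
    rw [← norm_pow, hr, norm_one]
  have h0 : 0 ≤ ‖t‖ := norm_nonneg t
  rcases lt_trichotomy ‖t‖ 1 with hlt | heq | hgt
  · exfalso
    have := pow_lt_one₀ h0 hlt hN.ne'
    rw [habs] at this; exact lt_irrefl 1 this
  · exact heq
  · exfalso
    have := one_lt_pow₀ hgt hN.ne'
    rw [habs] at this; exact lt_irrefl 1 this

theorem roots_card_eq (d : ℕ) (C : Matrix (Fin d) (Fin d) ℂ) :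
    (Matrix.charpoly C).roots.card = d := by
  rw [splits_iff_card_roots.1 (IsAlgClosed.splits _), Matrix.charpoly_natDegree_eq_dim,
    Fintype.card_fin]

theorem trace_map_int (d : ℕ) (B : Matrix (Fin d) (Fin d) ℤ) :
    ((Int.castRingHom ℂ).mapMatrix B).trace = ((B.trace : ℤ) : ℂ) := by
  simp [Matrix.trace, Matrix.diag, RingHom.mapMatrix_apply, Matrix.map_apply]

theorem trace_bound {d N : ℕ} (hN : 0 < N) (B : Matrix (Fin d) (Fin d) ℤ) (hB : B ^ N = 1) :
    |B.trace| ≤ (d : ℤ) := by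
  set C := (Int.castRingHom ℂ).mapMatrix B with hCdef
  have hCpow : C ^ N = 1 := by rw [hCdef, ← map_pow, hB, map_one]
  have hsum : C.trace = C.charpoly.roots.sum := Matrix.trace_eq_sum_roots_charpoly C
  have hnorm : C.charpoly.roots.map (fun t => ‖t‖) = Multiset.replicate d 1 := by
    apply Multiset.eq_replicate.2
    constructor
    · rw [Multiset.card_map, roots_card_eq]
    · intro b hb
      obtain ⟨t, ht, rfl⟩ := Multiset.mem_map.1 hb
      exact root_abs_one hN C hCpow t ht
  have habs : ‖C.trace‖ ≤ (d : ℝ) := by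
    rw [hsum]
    calc ‖C.charpoly.roots.sum‖ = ‖C.charpoly.roots.sum‖ := rfl
      _ ≤ (C.charpoly.roots.map (fun t => ‖t‖)).sum := norm_multiset_sum_le _
      _ = (d : ℝ) := by rw [hnorm, Multiset.sum_replicate, nsmul_eq_mul, mul_one]
  rw [trace_map_int] at habs
  rw [Complex.norm_intCast] at habs
  exact_mod_cast habs

theorem eq_one_of_trace {d N : ℕ} (hN : 0 < N) (B : Matrix (Fin d) (Fin d) ℤ)
    (hB : B ^ N = 1) (ht : B.trace = (d : ℤ)) : B = 1 := by
  rcases Nat.eq_zero_or_pos d with hd0 | hd1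
  · subst hd0; exact Subsingleton.elim B 1
  set C := (Int.castRingHom ℂ).mapMatrix B with hCdef
  have hCpow : C ^ N = 1 := by rw [hCdef, ← map_pow, hB, map_one]
  have htr : C.trace = ((B.trace : ℤ) : ℂ) := by
    simp [hCdef, Matrix.trace, Matrix.diag, RingHom.mapMatrix_apply, Matrix.map_apply]
  have hsum : C.charpoly.roots.sum = (d : ℂ) := by
    rw [← Matrix.trace_eq_sum_roots_charpoly C, htr, ht]; push_cast; rfl
  have hcard : C.charpoly.roots.card = d := by
    rw [splits_iff_card_roots.1 (IsAlgClosed.splits _),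
      Matrix.charpoly_natDegree_eq_dim, Fintype.card_fin]
  have habs : ∀ t ∈ C.charpoly.roots, ‖t‖ = 1 := by
    intro t ht'
    have hr : t ^ N = 1 := root_pow_one C hCpow t (Polynomial.isRoot_of_mem_roots ht')
    have habs : ‖t‖ ^ N = 1 := by rw [← norm_pow, hr, norm_one]
    have h0 : 0 ≤ ‖t‖ := norm_nonneg t
    rcases lt_trichotomy ‖t‖ 1 with hlt | heq | hgt
    · exact absurd (habs ▸ pow_lt_one₀ h0 hlt hN.ne') (lt_irrefl 1)
    · exact heq
    · exact absurd (habs ▸ one_lt_pow₀ hgt hN.ne') (lt_irrefl 1)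
  have hall : ∀ t ∈ C.charpoly.roots, t = 1 := by
    intro t ht'
    obtain ⟨s', hs'⟩ := Multiset.exists_cons_of_mem ht'
    have hcard' : s'.card = d - 1 := by
      have := hcard; rw [hs', Multiset.card_cons] at this; omega
    have hresum : t.re + (s'.map Complex.re).sum = (d : ℝ) := by
      have h1 : (C.charpoly.roots.map Complex.re).sum = ((C.charpoly.roots.sum).re) := by
        exact (Complex.reAddGroupHom.map_multiset_sum _).symm
      rw [hsum] at h1
      rw [hs', Multiset.map_cons, Multiset.sum_cons] at h1
      simpa using h1
    have hbound : (s'.map Complex.re).sum ≤ (d - 1 : ℕ) • (1 : ℝ) := by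
      rw [← hcard', ← Multiset.card_map Complex.re s']
      apply Multiset.sum_le_card_nsmul
      intro x hx
      obtain ⟨u, hu, rfl⟩ := Multiset.mem_map.1 hx
      have hu1 : ‖u‖ = 1 := habs u (by rw [hs']; exact Multiset.mem_cons_of_mem hu)
      calc u.re ≤ ‖u‖ := Complex.re_le_norm u
        _ = 1 := hu1
    have htre1 : t.re ≤ 1 := by
      have := habs t ht'
      calc t.re ≤ ‖t‖ := Complex.re_le_norm t
        _ = 1 := this
    have htre : t.re = 1 := by
      have hd' : (1 : ℝ) ≤ (d : ℝ) := by exact_mod_cast hd1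
      have : ((d - 1 : ℕ) : ℝ) = (d : ℝ) - 1 := by
        have : 1 ≤ d := hd1; push_cast [this]; ring
      rw [nsmul_eq_mul, mul_one, this] at hbound
      linarith
    have htabs : ‖t‖ = 1 := habs t ht'
    have him : t.im = 0 := by
      have h2 : t.re ^ 2 + t.im ^ 2 = 1 := by
        have h3 := Complex.sq_norm t
        rw [htabs, Complex.normSq_apply] at h3
        linear_combination -h3
      nlinarith [sq_nonneg t.im]
    exact Complex.ext (by rw [htre]; rfl) (by rw [him]; rfl)
  have hrepl : C.charpoly.roots = Multiset.replicate d 1 :=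
    Multiset.eq_replicate.2 ⟨hcard, hall⟩
  have hcp : C.charpoly = (X - Polynomial.C 1) ^ d := by
    have := (IsAlgClosed.splits C.charpoly).eq_prod_roots_of_monic (Matrix.charpoly_monic C)
    rw [hrepl, Multiset.map_replicate, Multiset.prod_replicate] at this
    exact this
  have hCH : (C - 1) ^ d = 0 := by
    have := Matrix.aeval_self_charpoly C
    rw [hcp] at this
    simpa [map_pow, map_sub, aeval_X] using this
  have hBnil : (B - 1) ^ d = 0 := by
    have hmap : (Int.castRingHom ℂ).mapMatrix ((B - 1) ^ d) = 0 := by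
      rw [map_pow, map_sub, map_one]; exact hCH
    ext i j
    have h5 : ((((B - 1) ^ d) i j : ℤ) : ℂ) = 0 := by
      simpa using congrFun (congrFun hmap i) j
    simp only [Matrix.zero_apply]
    exact_mod_cast h5
  obtain ⟨m, rfl⟩ : ∃ m, d = m + 1 := ⟨d - 1, by omega⟩
  obtain ⟨N', rfl⟩ : ∃ n', N = n' + 1 := ⟨N - 1, by omega⟩
  have hM : (B - 1) + 1 = B := by abel
  have := nilp_aux (m + 1) N' (B - 1) (by rw [hM]; exact hB) m hBnil
  rw [sub_eq_zero] at this
  exact this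



theorem cycleMatrix_apply (n : ℕ) (i j : Fin (n + 1)) :
    cycleMatrix (n + 1) i j = if j = i + 1 then 1 else 0 := by
  simp [cycleMatrix, Equiv.Perm.permMatrix, PEquiv.toMatrix_apply, Equiv.toPEquiv_apply,
    finRotate_succ_apply, eq_comm]

theorem finRotate_pow (n k : ℕ) (i : Fin (n + 1)) :
    ((finRotate (n + 1)) ^ k) i = i + (k : Fin (n + 1)) := by
  induction k with
  | zero => simp
  | succ m ih =>
    rw [pow_succ', Equiv.Perm.mul_apply, ih, finRotate_succ_apply]
    push_cast
    ring

theorem cycleMatrix_pow_apply (n k : ℕ) (i j : Fin (n + 1)) :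
    (cycleMatrix (n + 1) ^ k) i j = if j = i + (k : Fin (n + 1)) then 1 else 0 := by
  induction k generalizing i j with
  | zero => simp [Matrix.one_apply, eq_comm]
  | succ m ih =>
    rw [pow_succ, Matrix.mul_apply]
    simp only [ih, cycleMatrix_apply, ite_mul, one_mul, zero_mul]
    rw [Finset.sum_ite_eq' Finset.univ (i + (m : Fin (n + 1))) (fun l => if j = l + 1 then (1:ℤ) else 0)]
    simp only [Finset.mem_univ, if_true]
    congr 1
    · push_cast
      rw [add_assoc]

theorem cycleMatrix_pow_card (n : ℕ) : cycleMatrix (n + 1) ^ (n + 1) = 1 := by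
  ext i j
  rw [cycleMatrix_pow_apply, Matrix.one_apply]
  have : ((n + 1 : ℕ) : Fin (n + 1)) = 0 := by
    simp
  rw [this, add_zero]
  simp [eq_comm]


theorem stmt_2 (d : ℕ) (hd : 1 ≤ d) (A : Matrix (Fin d) (Fin d) ℤ)
    (hA : IsUnit A)
    (hfin : ∃ N : ℕ, 0 < N ∧ A ^ N = 1)
    (hcomm : A * cycleMatrix d = cycleMatrix d * A) :
    ∃ k < d, A = cycleMatrix d ^ k ∨ A = -(cycleMatrix d ^ k) := by
  obtain ⟨n, rfl⟩ : ∃ n, d = n + 1 := ⟨d - 1, by omega⟩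
  obtain ⟨N, hN, hAN⟩ := hfin
  set w := cycleMatrix (n + 1) with hw
  have hshift : ∀ i j : Fin (n + 1), A (i + 1) (j + 1) = A i j := by
    intro i j
    have h1 := congrFun (congrFun hcomm i) (j + 1)
    rw [Matrix.mul_apply, Matrix.mul_apply] at h1
    simp only [hw, cycleMatrix_apply, mul_ite, mul_one, mul_zero, ite_mul, zero_mul, one_mul,
      add_left_inj] at h1
    rw [Finset.sum_ite_eq, Finset.sum_ite_eq'] at h1
    simp only [Finset.mem_univ, if_true] at h1
    exact h1.symm
  have hshiftN : ∀ (t : ℕ) (i j : Fin (n + 1)), A (i + t) (j + t) = A i j := by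
    intro t
    induction t with
    | zero => intro i j; simp
    | succ t ih =>
      intro i j
      have e : ∀ x : Fin (n + 1), x + ((t + 1 : ℕ) : Fin (n + 1)) = (x + 1) + (t : Fin (n + 1)) := by
        intro x; push_cast; ring
      rw [e i, e j, ih (i + 1) (j + 1), hshift]
  have hrow : ∀ i j : Fin (n + 1), A i j = A 0 (j - i) := by
    intro i j
    have h2 := hshiftN i.val 0 (j - i)
    rw [Fin.cast_val_eq_self, zero_add, sub_add_cancel] at h2
    exact h2
  have htrace : ∀ m : ℕ, (A * w ^ m).trace = ((n : ℤ) + 1) * A 0 (-(m : Fin (n + 1))) := by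
    intro m
    have hdiag : ∀ i : Fin (n + 1), (A * w ^ m) i i = A 0 (-(m : Fin (n + 1))) := by
      intro i
      rw [Matrix.mul_apply]
      have hcond : ∀ l : Fin (n + 1),
          (if i = l + (m : Fin (n + 1)) then (1 : ℤ) else 0)
            = if l = i - (m : Fin (n + 1)) then 1 else 0 := by
        intro l
        refine if_congr ⟨fun h => by rw [h]; ring, fun h => by rw [h]; ring⟩ rfl rfl
      simp only [hw, cycleMatrix_pow_apply, hcond, mul_ite, mul_one, mul_zero]
      rw [Finset.sum_ite_eq' Finset.univ (i - (m : Fin (n + 1))) (fun l => A i l)]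
      simp only [Finset.mem_univ, if_true]
      rw [hrow i (i - (m : Fin (n + 1)))]
      congr 1
      ring
    rw [Matrix.trace]
    rw [Finset.sum_congr rfl (fun i _ => show (A * w ^ m).diag i = A 0 (-(m : Fin (n+1))) from hdiag i)]
    rw [Finset.sum_const, Finset.card_univ, Fintype.card_fin, nsmul_eq_mul]
    push_cast
    ring
  have htor : ∀ m : ℕ, (A * w ^ m) ^ (N * (n + 1)) = 1 := by
    intro m
    have hc : Commute A (w ^ m) := (show Commute A w from hcomm).pow_right m
    rw [hc.mul_pow, pow_mul A N (n + 1), hAN, one_pow, one_mul, ← pow_mul,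
      show m * (N * (n + 1)) = (n + 1) * (m * N) from by ring, pow_mul, hw,
      cycleMatrix_pow_card, one_pow]
  have hNpos : 0 < N * (n + 1) := by positivity
  have hnonzero : ∃ k : Fin (n + 1), A 0 k ≠ 0 := by
    by_contra hno
    push_neg at hno
    have hA0 : A = 0 := by
      ext i j
      rw [hrow i j]
      exact hno _
    rw [hA0, zero_pow hN.ne'] at hAN
    exact zero_ne_one hAN
  obtain ⟨k, hk⟩ := hnonzero
  set m : ℕ := (n + 1) - k.val with hm
  have hkval : k.val ≤ n := Nat.lt_succ_iff.1 k.isLt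
  have hneg : -((m : ℕ) : Fin (n + 1)) = k := by
    have h1 : ((m : ℕ) : Fin (n + 1)) = ((n + 1 : ℕ) : Fin (n + 1)) - (k.val : Fin (n + 1)) := by
      rw [hm, Nat.cast_sub (by omega)]
    rw [h1, Fin.natCast_self, Fin.cast_val_eq_self, zero_sub, neg_neg]
  have htr : (A * w ^ m).trace = ((n : ℤ) + 1) * A 0 k := by
    rw [htrace m, hneg]
  have habs := trace_bound hNpos (A * w ^ m) (htor m)
  have hone : A 0 k = 1 ∨ A 0 k = -1 := by
    rw [htr, abs_mul] at habs
    have h2 : |A 0 k| = 1 := by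
      have h3 : (1 : ℤ) ≤ |A 0 k| := Int.one_le_abs hk
      have h4 : |(n : ℤ) + 1| = (n : ℤ) + 1 := abs_of_pos (by positivity)
      rw [h4] at habs
      push_cast at habs
      nlinarith
    rcases abs_eq (by norm_num : (0:ℤ) ≤ 1) |>.1 h2 with h | h
    · exact Or.inl h
    · exact Or.inr h
  have hpowkm : w ^ m * w ^ k.val = 1 := by
    rw [← pow_add, show m + k.val = n + 1 from by omega, hw, cycleMatrix_pow_card]
  rcases hone with hca | hca
  · have hB1 : A * w ^ m = 1 := by
      apply eq_one_of_trace hNpos (A * w ^ m) (htor m)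
      rw [htr, hca, mul_one]
      push_cast
      ring
    refine ⟨k.val, k.isLt, Or.inl ?_⟩
    calc A = A * (w ^ m * w ^ k.val) := by rw [hpowkm, mul_one]
      _ = (A * w ^ m) * w ^ k.val := by rw [mul_assoc]
      _ = w ^ k.val := by rw [hB1, one_mul]
  · have htor2 : (-(A * w ^ m)) ^ (2 * (N * (n + 1))) = 1 := by
      have h6 : (A * w ^ m) ^ (2 * (N * (n + 1))) = 1 := by
        rw [show 2 * (N * (n + 1)) = (N * (n + 1)) * 2 from by ring, pow_mul, htor m, one_pow]
      rw [neg_pow, Even.neg_one_pow ⟨N * (n + 1), by ring⟩, one_mul, h6]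
    have hB1 : -(A * w ^ m) = 1 := by
      apply eq_one_of_trace (by positivity : 0 < 2 * (N * (n + 1))) _ htor2
      rw [Matrix.trace_neg, htr, hca]
      push_cast
      ring
    have hB2 : A * w ^ m = -1 := by
      rw [← neg_neg (A * w ^ m), hB1]
    refine ⟨k.val, k.isLt, Or.inr ?_⟩
    calc A = A * (w ^ m * w ^ k.val) := by rw [hpowkm, mul_one]
      _ = (A * w ^ m) * w ^ k.val := by rw [mul_assoc]
      _ = -(w ^ k.val) := by rw [hB2, neg_one_mul]
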